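/- arXiv:1203.4647 — 5 statements merged into one kernel-verified Lean document; each statement's English description precedes it below -/
import Mathlib

section
/- For every integer k ≥ 1, the determinant of the k×k matrix whose (i,j) entry (1 ≤ i,j ≤ k) is the binomial coefficient C(2k − i, 2j − 2) equals (−2)^{k(k−1)/2}. -/
open Finset Polynomial Equiv Equiv.Perm


lemma sum_range_eq_of_vanish {f : ℕ → ℚ} {N M : ℕ} (hN : ∀ m, N ≤ m → f m = 0)
    (hM : ∀ m, M ≤ m → f m = 0) : ∑ m ∈ range N, f m = ∑ m ∈ range M, f m := by
  rcases le_total N M with h | h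
  · exact Finset.sum_subset (range_subset_range.2 h) (fun x _ hx => hN x (by simpa using hx))
  · exact (Finset.sum_subset (range_subset_range.2 h) (fun x _ hx => hM x (by simpa using hx))).symm

-- finite difference identity
lemma diff_id (j : ℕ) : ∀ (t a : ℕ),
    ∑ d ∈ range (t+1), (-1:ℚ)^d * (t.choose d : ℚ) * ((a+d).choose j : ℚ)
      = if t ≤ j then (-1:ℚ)^t * ((a.choose (j - t) : ℕ) : ℚ) else 0 := by
  intro t
  induction t with
  | zero => intro a; simp
  | succ t ih =>
    intro a
    have peel : ∑ d ∈ range (t+2), (-1:ℚ)^d * ((t+1).choose d : ℚ) * ((a+d).choose j : ℚ)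
        = (∑ d ∈ range (t+1), (-1:ℚ)^(d+1) * ((t+1).choose (d+1) : ℚ) * ((a+(d+1)).choose j : ℚ))
          + (a.choose j : ℚ) := by
      rw [Finset.sum_range_succ' (fun d => (-1:ℚ)^d * ((t+1).choose d : ℚ) * ((a+d).choose j : ℚ))]
      simp
    rw [peel]
    have split : ∀ d ∈ range (t+1),
        (-1:ℚ)^(d+1) * ((t+1).choose (d+1) : ℚ) * ((a+(d+1)).choose j : ℚ)
        = -((-1:ℚ)^d * (t.choose d : ℚ) * (((a+1)+d).choose j : ℚ))
          + (-1:ℚ)^(d+1) * (t.choose (d+1) : ℚ) * ((a+(d+1)).choose j : ℚ) := by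
      intro d _
      rw [Nat.choose_succ_succ t d, show a + (d+1) = (a+1)+d from by ring]
      push_cast
      ring
    rw [Finset.sum_congr rfl split, Finset.sum_add_distrib]
    have reidx : ∑ d ∈ range (t+1), (-1:ℚ)^(d+1) * (t.choose (d+1) : ℚ) * ((a+(d+1)).choose j : ℚ)
        = (∑ d ∈ range (t+2), (-1:ℚ)^d * (t.choose d : ℚ) * ((a+d).choose j : ℚ))
          - (a.choose j : ℚ) := by
      rw [Finset.sum_range_succ' (fun d => (-1:ℚ)^d * (t.choose d : ℚ) * ((a+d).choose j : ℚ))]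
      simp
    have ext2 : ∑ d ∈ range (t+2), (-1:ℚ)^d * (t.choose d : ℚ) * ((a+d).choose j : ℚ)
        = ∑ d ∈ range (t+1), (-1:ℚ)^d * (t.choose d : ℚ) * ((a+d).choose j : ℚ) := by
      rw [Finset.sum_range_succ, Nat.choose_succ_self]
      simp
    have negdist : ∑ d ∈ range (t+1), -((-1:ℚ)^d * (t.choose d : ℚ) * (((a+1)+d).choose j : ℚ))
        = -∑ d ∈ range (t+1), (-1:ℚ)^d * (t.choose d : ℚ) * (((a+1)+d).choose j : ℚ) := by
      exact Finset.sum_neg_distrib (f := fun d => (-1:ℚ)^d * (t.choose d : ℚ) * (((a+1)+d).choose j : ℚ))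
    rw [negdist, reidx, ext2, ih a, ih (a+1)]
    by_cases h1 : t + 1 ≤ j
    · rw [if_pos (by omega : t ≤ j), if_pos (by omega : t ≤ j), if_pos h1]
      obtain ⟨m, hm⟩ : ∃ m, j - t = m + 1 := ⟨j - t - 1, by omega⟩
      have hm2 : j - (t+1) = m := by omega
      rw [hm, hm2, Nat.choose_succ_succ a m]
      push_cast
      ring
    · by_cases h2 : t ≤ j
      · have ht : t = j := by omega
        rw [if_pos h2, if_pos h2, if_neg h1]
        subst ht
        simp
        ring
      · rw [if_neg h2, if_neg h2, if_neg h1]; ring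

-- even binomial sum
lemma sum_choose_even (n N : ℕ) (hn : 1 ≤ n) (h : n < 2*N) :
    ∑ t ∈ range N, ((n.choose (2*t) : ℕ) : ℚ) = 2^(n-1) := by
  have key : ∀ M : ℕ, ∑ t ∈ range M, ((n.choose (2*t) : ℕ) : ℚ)
      = ∑ i ∈ range (2*M), (if Even i then ((n.choose i : ℕ) : ℚ) else 0) := by
    intro M
    induction M with
    | zero => simp
    | succ M ih =>
      rw [Finset.sum_range_succ, ih, show 2*(M+1) = (2*M)+1+1 by ring,
        Finset.sum_range_succ, Finset.sum_range_succ]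
      rw [if_pos (even_two_mul M), if_neg (by simp [parity_simps])]
      ring
  rw [key N]
  have h2 : (2:ℚ) * ∑ i ∈ range (2*N), (if Even i then ((n.choose i : ℕ) : ℚ) else 0)
      = ∑ i ∈ range (2*N), ((1:ℚ) + (-1)^i) * (n.choose i : ℚ) := by
    rw [Finset.mul_sum]
    apply Finset.sum_congr rfl
    intro i _
    by_cases he : Even i
    · rw [if_pos he, he.neg_one_pow]; ring
    · rw [if_neg he, (Nat.not_even_iff_odd.mp he).neg_one_pow]; ring
  have h3 : ∑ i ∈ range (2*N), ((1:ℚ) + (-1)^i) * (n.choose i : ℚ)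
      = (∑ i ∈ range (2*N), (n.choose i : ℚ))
        + ∑ i ∈ range (2*N), (-1:ℚ)^i * (n.choose i : ℚ) := by
    rw [← Finset.sum_add_distrib]; apply Finset.sum_congr rfl; intros; ring
  have h4 : ∑ i ∈ range (2*N), (n.choose i : ℚ) = 2^n := by
    have hcast : ((∑ m ∈ range (n+1), n.choose m : ℕ) : ℚ) = ((2^n : ℕ) : ℚ) := by
      rw [Nat.sum_range_choose n]
    push_cast at hcast
    rw [← hcast]
    apply sum_range_eq_of_vanish
    · intro m hm; rw [Nat.choose_eq_zero_of_lt (by omega)]; simp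
    · intro m hm; rw [Nat.choose_eq_zero_of_lt (by omega)]; simp
  have h5 : ∑ i ∈ range (2*N), (-1:ℚ)^i * (n.choose i : ℚ) = 0 := by
    have hcast : ((∑ i ∈ range (n+1), (-1:ℤ)^i * n.choose i : ℤ) : ℚ) = 0 := by
      rw [Int.alternating_sum_range_choose_of_ne (show n ≠ 0 by omega)]; simp
    push_cast at hcast
    rw [← hcast]
    apply sum_range_eq_of_vanish
    · intro m hm; rw [Nat.choose_eq_zero_of_lt (by omega)]; simp
    · intro m hm; rw [Nat.choose_eq_zero_of_lt (by omega)]; simp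
  have hfin : (2:ℚ) * ∑ i ∈ range (2*N), (if Even i then ((n.choose i : ℕ) : ℚ) else 0) = 2^n := by
    rw [h2, h3, h4, h5]; ring
  have hn' : (2:ℚ)^n = 2 * 2^(n-1) := by
    rw [← pow_succ']
    congr 1
    omega
  nlinarith [hfin]


lemma coeff_one_sub_X_pow (a m : ℕ) :
    ((1 - X : ℚ[X])^a).coeff m = (-1:ℚ)^m * (a.choose m : ℚ) := by
  have h : (1 - X : ℚ[X])^a = ∑ i ∈ range (a+1), C ((-1:ℚ)^i * (a.choose i : ℚ)) * X^i := by
    have h0 := add_pow (-X : ℚ[X]) 1 a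
    rw [show (-X + 1 : ℚ[X]) = 1 - X by ring] at h0
    rw [h0]
    apply Finset.sum_congr rfl
    intro i _
    rw [neg_pow]
    simp [C_mul]
    ring
  rw [h, finset_sum_coeff]
  simp only [coeff_C_mul, coeff_X_pow]
  by_cases hm : m ≤ a
  · rw [Finset.sum_eq_single m]
    · simp
    · intro b _ hb; simp [Ne.symm hb]
    · intro h2; exact absurd (mem_range.mpr (by omega)) h2
  · rw [Nat.choose_eq_zero_of_lt (by omega), Finset.sum_eq_zero]
    · simp
    · intro b hb
      have : m ≠ b := by have := mem_range.mp hb; omega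
      simp [this]

-- Vandermonde with if, in ℚ
lemma vander_if (a b n N : ℕ) (ha : a < N) :
    (((a+b).choose n : ℕ) : ℚ) =
      ∑ m ∈ range N, (a.choose m : ℚ) * (if m ≤ n then ((b.choose (n-m)) : ℚ) else 0) := by
  have h1 : ((a+b).choose n : ℕ) = ∑ m ∈ range (n+1), a.choose m * b.choose (n-m) := by
    rw [Nat.add_choose_eq, Finset.Nat.sum_antidiagonal_eq_sum_range_succ_mk]
  rw [h1]
  push_cast
  have : ∀ m ∈ range (n+1), (a.choose m : ℚ) * (b.choose (n-m) : ℚ)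
      = (a.choose m : ℚ) * (if m ≤ n then ((b.choose (n-m)) : ℚ) else 0) := by
    intro m hm
    rw [if_pos (Nat.lt_succ_iff.mp (mem_range.mp hm))]
  rw [Finset.sum_congr rfl this]
  apply sum_range_eq_of_vanish
  · intro m hm
    rw [if_neg (by omega)]
    ring
  · intro m hm
    rw [Nat.choose_eq_zero_of_lt (by omega)]
    push_cast; ring

-- key identity 2 (scalar form)
lemma key2 (k a j : ℕ) (hk : 1 ≤ k) (ha : a < k) (hj : j < k) :
    ∑ m ∈ range k, ((-1:ℚ)^m * (a.choose m : ℚ))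
        * (if m ≤ 2*j then ((k.choose (2*j-m) : ℕ) : ℚ) else 0)
    = ∑ t ∈ range k, (((k-a).choose (2*t) : ℕ) : ℚ)
        * ((-1:ℚ)^j * (if t ≤ j then (-1:ℚ)^t * ((a.choose (j-t) : ℕ) : ℚ) else 0)) := by
  -- LHS = coeff (2j) of (1-X)^a (1+X)^k
  have hL : ∑ m ∈ range k, ((-1:ℚ)^m * (a.choose m : ℚ))
        * (if m ≤ 2*j then ((k.choose (2*j-m) : ℕ) : ℚ) else 0)
      = ((1 - X : ℚ[X])^a * (1 + X)^k).coeff (2*j) := by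
    rw [coeff_mul, Finset.Nat.sum_antidiagonal_eq_sum_range_succ_mk]
    simp only [coeff_one_sub_X_pow, coeff_one_add_X_pow]
    simp only [Nat.succ_eq_add_one]
    have hcg : ∀ m ∈ range (2*j+1), (-1:ℚ)^m * (a.choose m : ℚ) * ((k.choose (2*j-m) : ℕ) : ℚ)
        = ((-1:ℚ)^m * (a.choose m : ℚ))
            * (if m ≤ 2*j then ((k.choose (2*j-m) : ℕ) : ℚ) else 0) := by
      intro m hm
      have hm2 : m ≤ 2*j := Nat.lt_succ_iff.mp (mem_range.mp hm)
      rw [if_pos hm2]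
    rw [Finset.sum_congr rfl hcg]
    apply sum_range_eq_of_vanish
    · intro m hm
      rw [Nat.choose_eq_zero_of_lt (by omega : a < m)]
      push_cast; ring
    · intro m hm
      rw [if_neg (by omega)]; ring
  -- factor
  have hfac : (1 - X : ℚ[X])^a * (1 + X)^k = (1 - X^2)^a * (1 + X)^(k-a) := by
    have : (1 + X : ℚ[X])^k = (1 + X)^a * (1 + X)^(k-a) := by
      rw [← pow_add]; congr 1; omega
    rw [this, ← mul_assoc, ← mul_pow]
    congr 2
    ring
  -- expand (1 - X^2)^a
  have hexp : (1 - X^2 : ℚ[X])^a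
      = ∑ s ∈ range (a+1), Polynomial.C ((-1:ℚ)^s * (a.choose s : ℚ)) * X^(2*s) := by
    have h0 := add_pow (-(X^2) : ℚ[X]) 1 a
    rw [show (-(X^2) + 1 : ℚ[X]) = 1 - X^2 by ring] at h0
    rw [h0]
    apply Finset.sum_congr rfl
    intro s _
    rw [neg_pow]
    simp [C_mul, pow_mul]
    ring
  have hR : ((1 - X : ℚ[X])^a * (1 + X)^k).coeff (2*j)
      = ∑ s ∈ range (a+1), ((-1:ℚ)^s * (a.choose s : ℚ))
          * (if 2*s ≤ 2*j then (((k-a).choose (2*j - 2*s) : ℕ) : ℚ) else 0) := by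
    rw [hfac, hexp, Finset.sum_mul, finset_sum_coeff]
    apply Finset.sum_congr rfl
    intro s _
    rw [show Polynomial.C ((-1:ℚ)^s * (a.choose s : ℚ)) * X^(2*s) * (1+X)^(k-a)
        = (Polynomial.C ((-1:ℚ)^s * (a.choose s : ℚ)) * (1+X)^(k-a)) * X^(2*s) by ring]
    rw [coeff_mul_X_pow']
    by_cases h : 2*s ≤ 2*j
    · rw [if_pos h, if_pos h, coeff_C_mul, coeff_one_add_X_pow]
    · rw [if_neg h, if_neg h, mul_zero]
  rw [hL, hR]
  -- now reindex to range (j+1), reflect, and extend to range k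
  have step1 : ∑ s ∈ range (a+1), ((-1:ℚ)^s * (a.choose s : ℚ))
          * (if 2*s ≤ 2*j then (((k-a).choose (2*j - 2*s) : ℕ) : ℚ) else 0)
      = ∑ s ∈ range (j+1), ((-1:ℚ)^s * (a.choose s : ℚ))
          * (if 2*s ≤ 2*j then (((k-a).choose (2*j - 2*s) : ℕ) : ℚ) else 0) := by
    apply sum_range_eq_of_vanish
    · intro m hm; rw [Nat.choose_eq_zero_of_lt (by omega : a < m)]; push_cast; ring
    · intro m hm; rw [if_neg (by omega)]; ring
  rw [step1]
  have step2 : ∑ s ∈ range (j+1), ((-1:ℚ)^s * (a.choose s : ℚ))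
          * (if 2*s ≤ 2*j then (((k-a).choose (2*j - 2*s) : ℕ) : ℚ) else 0)
      = ∑ t ∈ range (j+1), ((-1:ℚ)^(j-t) * (a.choose (j-t) : ℚ))
          * (((k-a).choose (2*t) : ℕ) : ℚ) := by
    rw [← Finset.sum_range_reflect]
    apply Finset.sum_congr rfl
    intro t ht
    have htj : t ≤ j := by have := mem_range.mp ht; omega
    rw [show j + 1 - 1 - t = j - t by omega, if_pos (by omega : 2*(j-t) ≤ 2*j),
      show 2*j - 2*(j-t) = 2*t by omega]
  rw [step2]
  -- compare with RHS restricted to range (j+1)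
  have step3 : ∑ t ∈ range k, (((k-a).choose (2*t) : ℕ) : ℚ)
        * ((-1:ℚ)^j * (if t ≤ j then (-1:ℚ)^t * ((a.choose (j-t) : ℕ) : ℚ) else 0))
      = ∑ t ∈ range (j+1), (((k-a).choose (2*t) : ℕ) : ℚ)
        * ((-1:ℚ)^j * (if t ≤ j then (-1:ℚ)^t * ((a.choose (j-t) : ℕ) : ℚ) else 0)) := by
    apply sum_range_eq_of_vanish
    · intro m hm; rw [if_neg (by omega)]; ring
    · intro m hm; rw [if_neg (by omega)]; ring
  rw [step3]
  apply Finset.sum_congr rfl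
  intro t ht
  have htj : t ≤ j := by have := mem_range.mp ht; omega
  rw [if_pos htj]
  have hsign : (-1:ℚ)^(j-t) = (-1:ℚ)^j * (-1:ℚ)^t := by
    rw [← pow_add]
    have h2 : (-1:ℚ)^(j-t) * (-1:ℚ)^(2*t) = (-1:ℚ)^(j+t) := by
      rw [← pow_add]; congr 1; omega
    rw [← h2]
    simp [pow_mul]
  rw [hsign]
  ring

lemma key3 (k a j : ℕ) (ha : a < k) (hj : j < k) :
    ∑ c ∈ range k, (if a ≤ c then (-1:ℚ)^(c-a)
          * (∑ t ∈ range k, (((k-a).choose (2*t) : ℕ) : ℚ) * ((t.choose (c-a) : ℕ) : ℚ)) else 0)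
        * ((-1:ℚ)^j * ((c.choose j : ℕ) : ℚ))
    = ∑ t ∈ range k, (((k-a).choose (2*t) : ℕ) : ℚ)
        * ((-1:ℚ)^j * (if t ≤ j then (-1:ℚ)^t * ((a.choose (j-t) : ℕ) : ℚ) else 0)) := by
  have swap1 : ∀ c ∈ range k, (if a ≤ c then (-1:ℚ)^(c-a)
          * (∑ t ∈ range k, (((k-a).choose (2*t) : ℕ) : ℚ) * ((t.choose (c-a) : ℕ) : ℚ)) else 0)
        * ((-1:ℚ)^j * ((c.choose j : ℕ) : ℚ))
      = ∑ t ∈ range k, (if a ≤ c then (((k-a).choose (2*t) : ℕ) : ℚ)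
          * ((-1:ℚ)^(c-a) * ((t.choose (c-a) : ℕ) : ℚ)
             * ((-1:ℚ)^j * ((c.choose j : ℕ) : ℚ))) else 0) := by
    intro c _
    by_cases h : a ≤ c
    · simp only [if_pos h, Finset.mul_sum, Finset.sum_mul]
      apply Finset.sum_congr rfl
      intro t _
      ring
    · rw [if_neg h, Finset.sum_eq_zero]
      · ring
      · intro t _; rw [if_neg h]
  rw [Finset.sum_congr rfl swap1, Finset.sum_comm]
  apply Finset.sum_congr rfl
  intro t ht
  by_cases h2t : 2*t ≤ k - a
  · have htk : t + 1 ≤ k - a := by omega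
    have inner : ∑ c ∈ range k, (if a ≤ c then (((k-a).choose (2*t) : ℕ) : ℚ)
          * ((-1:ℚ)^(c-a) * ((t.choose (c-a) : ℕ) : ℚ)
             * ((-1:ℚ)^j * ((c.choose j : ℕ) : ℚ))) else 0)
        = (((k-a).choose (2*t) : ℕ) : ℚ) * ((-1:ℚ)^j
            * ∑ d ∈ range (t+1), (-1:ℚ)^d * ((t.choose d : ℕ) : ℚ) * (((a+d).choose j : ℕ) : ℚ)) := by
      rw [Finset.range_eq_Ico, ← Finset.sum_Ico_consecutive _ (Nat.zero_le a) (le_of_lt ha)]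
      have hz : ∑ c ∈ Finset.Ico 0 a, (if a ≤ c then (((k-a).choose (2*t) : ℕ) : ℚ)
          * ((-1:ℚ)^(c-a) * ((t.choose (c-a) : ℕ) : ℚ)
             * ((-1:ℚ)^j * ((c.choose j : ℕ) : ℚ))) else 0) = 0 := by
        apply Finset.sum_eq_zero
        intro c hc
        rw [if_neg (by have := (Finset.mem_Ico.mp hc).2; omega)]
      rw [hz, zero_add, Finset.sum_Ico_eq_sum_range]
      have hcg : ∀ d ∈ range (k-a), (if a ≤ a+d then (((k-a).choose (2*t) : ℕ) : ℚ)
          * ((-1:ℚ)^((a+d)-a) * ((t.choose ((a+d)-a) : ℕ) : ℚ)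
             * ((-1:ℚ)^j * (((a+d).choose j : ℕ) : ℚ))) else 0)
          = (((k-a).choose (2*t) : ℕ) : ℚ) * ((-1:ℚ)^j
              * ((-1:ℚ)^d * ((t.choose d : ℕ) : ℚ) * (((a+d).choose j : ℕ) : ℚ))) := by
        intro d _
        rw [if_pos (Nat.le_add_right a d), Nat.add_sub_cancel_left]
        ring
      rw [Finset.sum_congr rfl hcg, ← Finset.mul_sum, ← Finset.mul_sum]
      congr 2
      apply sum_range_eq_of_vanish
      · intro m hm
        rw [Nat.choose_eq_zero_of_lt (by omega : t < m)]
        push_cast; ring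
      · intro m hm
        rw [Nat.choose_eq_zero_of_lt (by omega : t < m)]
        push_cast; ring
    rw [inner, diff_id j t a]
  · have hz : ((k-a).choose (2*t) : ℕ) = 0 := Nat.choose_eq_zero_of_lt (by omega)
    rw [Finset.sum_eq_zero, hz]
    · push_cast; ring
    · intro c _
      by_cases h : a ≤ c
      · rw [if_pos h, hz]; push_cast; ring
      · rw [if_neg h]

lemma sign_revPerm_fin : ∀ n : ℕ, Perm.sign (Fin.revPerm : Perm (Fin n)) = (-1)^(n*(n-1)/2)
  | 0 => by
    have h : (Fin.revPerm : Perm (Fin 0)) = 1 := by ext i; exact absurd i.isLt (by omega)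
    rw [h]; simp
  | (n+1) => by
    let f : Fin n ≃ {i : Fin (n+1) // (i:ℕ) < n} :=
      { toFun := fun x => ⟨⟨(x:ℕ), by omega⟩, by simpa using x.isLt⟩
        invFun := fun y => ⟨(y.1:ℕ), y.2⟩
        left_inv := fun x => by ext; simp
        right_inv := fun y => by ext; simp }
    have claim : (Fin.revPerm : Perm (Fin (n+1))) * finRotate (n+1)
        = (Fin.revPerm : Perm (Fin n)).extendDomain f := by
      ext i
      by_cases hi : (i:ℕ) < n
      · rw [Perm.extendDomain_apply_subtype _ f hi]
        have h1 : ((finRotate (n+1)) i : ℕ) = (i:ℕ) + 1 := by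
          rw [coe_finRotate, if_neg (by rw [Fin.ext_iff]; simp; omega)]
        have h2 : ((Fin.revPerm * finRotate (n+1) : Perm (Fin (n+1))) i : ℕ) = n - ((i:ℕ)+1) := by
          simp only [Perm.mul_apply, Fin.revPerm_apply, Fin.val_rev, h1]
          omega
        rw [h2]
        simp [f, Fin.val_rev]
      · rw [Perm.extendDomain_apply_not_subtype _ f hi]
        have hil : i = Fin.last n := Fin.ext (by simp; omega)
        subst hil
        have h1 : ((finRotate (n+1)) (Fin.last n) : ℕ) = 0 := by
          rw [coe_finRotate, if_pos rfl]
        simp only [Perm.mul_apply, Fin.revPerm_apply, Fin.val_rev, h1, Fin.val_last]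
        omega
    have hsign := congrArg Perm.sign claim
    rw [Perm.sign_mul, sign_finRotate, Perm.sign_extendDomain, sign_revPerm_fin n] at hsign
    have hone : ((-1:ℤˣ))^n * (-1)^n = 1 := by rw [← mul_pow]; norm_num
    have h2 : Perm.sign (Fin.revPerm : Perm (Fin (n+1)))
        = (-1)^(n*(n-1)/2) * (-1)^n := by
      rw [← hsign, Nat.add_sub_cancel, mul_assoc, hone, mul_one]
    rw [h2, ← pow_add]
    congr 1
    rw [← Nat.choose_two_right, ← Nat.choose_two_right, show (2:ℕ) = 1+1 from rfl,
      Nat.choose_succ_succ, Nat.choose_one_right, Nat.add_comm]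




/-- For every integer `k ≥ 1`, the determinant of the `k × k` matrix whose
`(i,j)` entry (with `1 ≤ i, j ≤ k`) is the binomial coefficient `C(2k − i, 2j − 2)`
equals `(−2)^(k(k−1)/2)`.  Rows and columns are indexed by `Fin k`, so the `1`-indexed
indices `i, j` correspond to `(i : Fin k) + 1` and `(j : Fin k) + 1`. -/
theorem determinant_binomial_column_reversed (k : ℕ) (hk : 1 ≤ k) :
    Matrix.det (Matrix.of fun i j : Fin k =>
      ((2 * k - ((i : ℕ) + 1)).choose (2 * (j : ℕ)) : ℚ))
    = (-2) ^ (k * (k - 1) / 2) := by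
  set σn := k * (k-1) / 2 with hσn
  -- matrices
  set P : Matrix (Fin k) (Fin k) ℚ := Matrix.of fun i m : Fin k => (((i:ℕ).choose (m:ℕ) : ℕ) : ℚ) with hP
  set A : Matrix (Fin k) (Fin k) ℚ := P.submatrix Fin.revPerm id with hA
  set B : Matrix (Fin k) (Fin k) ℚ := Matrix.of fun m j : Fin k =>
    (if (m:ℕ) ≤ 2*(j:ℕ) then ((k.choose (2*(j:ℕ) - (m:ℕ)) : ℕ) : ℚ) else 0) with hB
  set L : Matrix (Fin k) (Fin k) ℚ := Matrix.of fun a m : Fin k =>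
    (-1:ℚ)^(m:ℕ) * (((a:ℕ).choose (m:ℕ) : ℕ) : ℚ) with hL
  set F : Matrix (Fin k) (Fin k) ℚ := Matrix.of fun a c : Fin k =>
    (if (a:ℕ) ≤ (c:ℕ) then (-1:ℚ)^((c:ℕ)-(a:ℕ))
      * (∑ t ∈ range k, (((k-(a:ℕ)).choose (2*t) : ℕ) : ℚ) * ((t.choose ((c:ℕ)-(a:ℕ)) : ℕ) : ℚ))
      else 0) with hF
  -- identity 1 : M = A * B
  have hM : (Matrix.of fun i j : Fin k =>
      ((2 * k - ((i : ℕ) + 1)).choose (2 * (j : ℕ)) : ℚ)) = A * B := by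
    ext i j
    rw [Matrix.mul_apply]
    simp only [hA, hB, hP, Matrix.submatrix_apply, Matrix.of_apply, id_eq, Fin.revPerm_apply,
      Fin.val_rev]
    rw [Fin.sum_univ_eq_sum_range (fun m => ((k - ((i:ℕ)+1)).choose m : ℚ)
      * (if m ≤ 2*(j:ℕ) then ((k.choose (2*(j:ℕ) - m) : ℕ) : ℚ) else 0)) k]
    have := vander_if (k - ((i:ℕ)+1)) k (2*(j:ℕ)) k (by have := i.isLt; omega)
    rw [show k - ((i:ℕ)+1) + k = 2*k - ((i:ℕ)+1) from by have := i.isLt; omega] at this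
    exact this
  -- identity 2 : L * B = F * W
  have hLB : L * B = F * L := by
    ext a j
    rw [Matrix.mul_apply, Matrix.mul_apply]
    simp only [hL, hB, hF, Matrix.of_apply]
    rw [Fin.sum_univ_eq_sum_range (fun m => ((-1:ℚ)^m * (((a:ℕ).choose m : ℕ) : ℚ))
      * (if m ≤ 2*(j:ℕ) then ((k.choose (2*(j:ℕ) - m) : ℕ) : ℚ) else 0)) k]
    rw [Fin.sum_univ_eq_sum_range (fun c => (if (a:ℕ) ≤ c then (-1:ℚ)^(c-(a:ℕ))
      * (∑ t ∈ range k, (((k-(a:ℕ)).choose (2*t) : ℕ) : ℚ) * ((t.choose (c-(a:ℕ)) : ℕ) : ℚ))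
      else 0) * ((-1:ℚ)^(j:ℕ) * ((c.choose (j:ℕ) : ℕ) : ℚ))) k]
    rw [key2 k (a:ℕ) (j:ℕ) hk a.isLt j.isLt, key3 k (a:ℕ) (j:ℕ) a.isLt j.isLt]
  -- sums
  have hsum : ∑ i ∈ range k, i = σn := by
    have h2 := Finset.sum_range_id_mul_two k
    omega
  -- determinant of P
  have hdetP : P.det = 1 := by
    have htri : P.BlockTriangular OrderDual.toDual := by
      intro i j hij
      have : (i:ℕ) < (j:ℕ) := hij
      simp only [hP, Matrix.of_apply]
      rw [Nat.choose_eq_zero_of_lt this]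
      simp
    rw [Matrix.det_of_lowerTriangular P htri]
    apply Finset.prod_eq_one
    intro i _
    simp [hP]
  -- determinant of A
  have hdetA : A.det = (-1:ℚ)^σn := by
    rw [hA, Matrix.det_permute, hdetP, sign_revPerm_fin k, mul_one]
    push_cast
    norm_num
    rw [hσn]
  -- determinant of L
  have hdetL : L.det = (-1:ℚ)^σn := by
    have htri : L.BlockTriangular OrderDual.toDual := by
      intro a m ham
      have : (a:ℕ) < (m:ℕ) := ham
      simp only [hL, Matrix.of_apply]
      rw [Nat.choose_eq_zero_of_lt this]
      simp
    rw [Matrix.det_of_lowerTriangular L htri]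
    have : ∀ a : Fin k, L a a = (-1:ℚ)^(a:ℕ) := by
      intro a; simp [hL]
    rw [Finset.prod_congr rfl (fun a _ => this a), Finset.prod_pow_eq_pow_sum,
      Fin.sum_univ_eq_sum_range (fun i => i) k, hsum]
  -- determinant of F
  have hdetF : F.det = (2:ℚ)^σn := by
    have htri : F.BlockTriangular id := by
      intro a c hac
      have : (c:ℕ) < (a:ℕ) := hac
      simp only [hF, Matrix.of_apply]
      rw [if_neg (by omega)]
    rw [Matrix.det_of_upperTriangular htri]
    have hdiag : ∀ a : Fin k, F a a = (2:ℚ)^(k - (a:ℕ) - 1) := by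
      intro a
      simp only [hF, Matrix.of_apply, if_pos (le_refl (a:ℕ)), Nat.sub_self, pow_zero, one_mul,
        Nat.choose_zero_right, Nat.cast_one, mul_one]
      rw [sum_choose_even (k - (a:ℕ)) k (by have := a.isLt; omega) (by have := a.isLt; omega)]
    rw [Finset.prod_congr rfl (fun a _ => hdiag a), Finset.prod_pow_eq_pow_sum]
    congr 1
    rw [Fin.sum_univ_eq_sum_range (fun i => k - i - 1) k]
    have hrefl := Finset.sum_range_reflect (fun i => i) k
    have : ∀ i ∈ range k, k - i - 1 = k - 1 - i := by intro i _; omega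
    rw [Finset.sum_congr rfl this, hrefl, hsum]
  -- assemble
  have hdets : L.det * B.det = F.det * L.det := by rw [← Matrix.det_mul, ← Matrix.det_mul, hLB]
  rw [hdetL, hdetF] at hdets
  have hne : (-1:ℚ)^σn ≠ 0 := pow_ne_zero _ (by norm_num)
  have hdetB : B.det = (2:ℚ)^σn := by
    have : (-1:ℚ)^σn * B.det = (-1:ℚ)^σn * (2:ℚ)^σn := by
      rw [hdets]; ring
    exact mul_left_cancel₀ hne this
  calc (Matrix.of fun i j : Fin k =>
      ((2 * k - ((i : ℕ) + 1)).choose (2 * (j : ℕ)) : ℚ)).det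
      = (A * B).det := by rw [hM]
    _ = A.det * B.det := Matrix.det_mul A B
    _ = (-1:ℚ)^σn * (2:ℚ)^σn := by rw [hdetA, hdetB]
    _ = (-2:ℚ)^σn := by rw [← mul_pow]; norm_num
end

section
/- For every integer k ≥ 1, ∑_{σ,τ ∈ S_k} sgn(σ) sgn(τ) ∏_{i=1}^k 1/(2k + 2 − σ(i) − 2τ(i))! = (−1)^{k(k−1)/2} · 2^{k(k−1)/2} · k! · ∏_{j=0}^{k−1} (2j)!/(k+j)!, where by convention 1/n! = 0 when n < 0. Equivalently, the coefficient of z₁^{2k−1} z₂^{2k−1} ⋯ z_k^{2k−1} in the formal power series Δ(z₁,…,z_k) · Δ(z₁²,…,z_k²) · exp(z₁ + ⋯ + z_k) over ℚ equals (−1)^{k(k−1)/2} 2^{k(k−1)/2} k! ∏_{j=0}^{k−1} (2j)!/(k+j)!. -/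
open scoped BigOperators

/-- `factInv n = 1/n!` for `n ≥ 0`, and `0` for `n < 0`. -/
def factInv (n : ℤ) : ℚ :=
  if 0 ≤ n then 1 / (n.toNat.factorial : ℚ) else 0

open Finset Equiv Matrix Polynomial

lemma fact_mul_factInv (N j : ℕ) :
    (N.factorial : ℚ) * factInv ((N : ℤ) - j) = (N.descFactorial j : ℚ) := by
  rcases le_or_gt j N with h | h
  · have h1 : (N : ℤ) - j = ((N - j : ℕ) : ℤ) := by omega
    rw [h1]
    have h2 : factInv ((N - j : ℕ) : ℤ) = 1 / (((N - j).factorial : ℚ)) := by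
      simp [factInv]
    rw [h2]
    have h3 : N.descFactorial j * (N - j).factorial = N.factorial := by
      rw [mul_comm]; exact Nat.factorial_mul_descFactorial h
    have h4 : ((N - j).factorial : ℚ) ≠ 0 := by
      exact_mod_cast (Nat.factorial_pos _).ne'
    field_simp
    rw [mul_comm]; exact_mod_cast h3.symm
  · have h1 : factInv ((N : ℤ) - j) = 0 := by
      rw [factInv, if_neg]; omega
    rw [h1, Nat.descFactorial_eq_zero_iff_lt.2 h]
    simp

lemma oddprod (k : ℕ) :
    ∏ j ∈ range k, (2 * k - 1 - 2 * j).factorial = ∏ j ∈ range k, (2 * j + 1).factorial := by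
  rw [← Finset.prod_range_reflect (fun j => (2 * j + 1).factorial) k]
  refine Finset.prod_congr rfl fun j hj => ?_
  rw [mem_range] at hj
  congr 1
  omega

lemma evenodd (k : ℕ) :
    (∏ j ∈ range k, (2 * j).factorial) * ∏ j ∈ range k, (2 * j + 1).factorial
      = ∏ j ∈ range (k + k), j.factorial := by
  induction k with
  | zero => simp
  | succ k ih =>
    have h : k + 1 + (k + 1) = (k + k) + 1 + 1 := by omega
    rw [prod_range_succ, prod_range_succ, h, prod_range_succ, prod_range_succ, ← ih]
    have e1 : k + k = 2 * k := by omega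
    rw [e1]
    ring

lemma keyNat (k : ℕ) (hk : 1 ≤ k) :
    (Nat.superFactorial (k - 1)) * ∏ j ∈ range k, (k + j).factorial
      = (∏ j ∈ range k, (2 * j).factorial) * ∏ j ∈ range k, (2 * k - 1 - 2 * j).factorial := by
  obtain ⟨m, rfl⟩ : ∃ m, k = m + 1 := ⟨k - 1, by omega⟩
  rw [oddprod, evenodd]
  have h1 : Nat.superFactorial (m + 1 - 1) = ∏ j ∈ range (m + 1), j.factorial := by
    simpa using (Nat.prod_range_succ_factorial m).symm
  rw [h1, ← Finset.prod_range_add Nat.factorial (m + 1) (m + 1)]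

lemma sumIoi (k : ℕ) : ∑ i : Fin k, (Finset.Ioi i).card = k * (k - 1) / 2 := by
  have h1 : ∀ i : Fin k, (Finset.Ioi i).card = k - 1 - (i : ℕ) := fun i => Fin.card_Ioi i
  have h2 : ∑ i : Fin k, (Finset.Ioi i).card = ∑ i ∈ range k, (k - 1 - i) := by
    rw [← Fin.sum_univ_eq_sum_range (fun i => k - 1 - i) k]
    exact Finset.sum_congr rfl fun i _ => h1 i
  rw [h2, Finset.sum_range_reflect (fun i => i) k, Finset.sum_range_id]

lemma vand_scale {k : ℕ} (c : ℚ) (v : Fin k → ℚ) :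
    (Matrix.vandermonde (fun i => c * v i)).det
      = c ^ (∑ i : Fin k, (Finset.Ioi i).card) * (Matrix.vandermonde v).det := by
  rw [Matrix.det_vandermonde, Matrix.det_vandermonde, ← Finset.prod_pow_eq_pow_sum,
    ← Finset.prod_mul_distrib]
  refine Finset.prod_congr rfl fun i _ => ?_
  rw [← Finset.prod_const, ← Finset.prod_mul_distrib]
  exact Finset.prod_congr rfl fun j _ => by ring

/-- For every integer `k ≥ 1`,
`∑_{σ,τ ∈ S_k} sgn(σ) sgn(τ) ∏_{i=1}^k 1/(2k + 2 − σ(i) − 2τ(i))!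
 = (−1)^(k(k−1)/2) · 2^(k(k−1)/2) · k! · ∏_{j=0}^{k−1} (2j)!/(k+j)!`,
with the convention `1/n! = 0` for `n < 0`.  Here `σ, τ` are `0`-indexed
permutations of `Fin k`, so the `1`-indexed values `σ(i), τ(i)` become
`σ(i) + 1, τ(i) + 1` and the argument `2k + 2 − σ(i) − 2τ(i)` becomes
`2k − 1 − σ(i) − 2τ(i)`. -/
theorem double_permutation_sum_factorials (k : ℕ) (hk : 1 ≤ k) :
    ∑ σ : Equiv.Perm (Fin k), ∑ τ : Equiv.Perm (Fin k),
      ((Equiv.Perm.sign σ : ℤ) : ℚ) * ((Equiv.Perm.sign τ : ℤ) : ℚ) *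
        ∏ i : Fin k,
          factInv (2 * (k : ℤ) - 1 - ((σ i : ℕ) : ℤ) - 2 * ((τ i : ℕ) : ℤ))
    = (-1) ^ (k * (k - 1) / 2) * 2 ^ (k * (k - 1) / 2) * (k.factorial : ℚ) *
        ∏ j ∈ Finset.range k, ((2 * j).factorial : ℚ) / ((k + j).factorial : ℚ) := by
  classical
  set C := k * (k - 1) / 2 with hC
  -- the base matrix
  set M₀ : Matrix (Fin k) (Fin k) ℚ :=
    Matrix.of (fun i j : Fin k => factInv (2 * (k : ℤ) - 1 - ((i : ℕ) : ℤ) - 2 * ((j : ℕ) : ℤ)))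
    with hM₀
  -- Step 1 : the double sum equals k! * det M₀
  have step1 : ∑ σ : Equiv.Perm (Fin k), ∑ τ : Equiv.Perm (Fin k),
      ((Equiv.Perm.sign σ : ℤ) : ℚ) * ((Equiv.Perm.sign τ : ℤ) : ℚ) *
        ∏ i : Fin k,
          factInv (2 * (k : ℤ) - 1 - ((σ i : ℕ) : ℤ) - 2 * ((τ i : ℕ) : ℤ))
      = (k.factorial : ℚ) * M₀.det := by
    rw [Finset.sum_comm]
    have hτ : ∀ τ : Equiv.Perm (Fin k),
        ∑ σ : Equiv.Perm (Fin k),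
          ((Equiv.Perm.sign σ : ℤ) : ℚ) * ((Equiv.Perm.sign τ : ℤ) : ℚ) *
            ∏ i : Fin k,
              factInv (2 * (k : ℤ) - 1 - ((σ i : ℕ) : ℤ) - 2 * ((τ i : ℕ) : ℤ))
          = M₀.det := by
      intro τ
      have h1 : ∑ σ : Equiv.Perm (Fin k),
          ((Equiv.Perm.sign σ : ℤ) : ℚ) *
            ∏ i : Fin k,
              factInv (2 * (k : ℤ) - 1 - ((σ i : ℕ) : ℤ) - 2 * ((τ i : ℕ) : ℤ))
          = (M₀.submatrix id τ).det := by
        rw [Matrix.det_apply']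
        refine Finset.sum_congr rfl fun σ _ => ?_
        congr 1
      have h2 : ∑ σ : Equiv.Perm (Fin k),
          ((Equiv.Perm.sign σ : ℤ) : ℚ) * ((Equiv.Perm.sign τ : ℤ) : ℚ) *
            ∏ i : Fin k,
              factInv (2 * (k : ℤ) - 1 - ((σ i : ℕ) : ℤ) - 2 * ((τ i : ℕ) : ℤ))
          = ((Equiv.Perm.sign τ : ℤ) : ℚ) * (M₀.submatrix id τ).det := by
        rw [← h1, Finset.mul_sum]
        exact Finset.sum_congr rfl fun σ _ => by ring
      rw [h2, Matrix.det_permute']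
      have h3 : ((Equiv.Perm.sign τ : ℤ) : ℚ) * ((Equiv.Perm.sign τ : ℤ) : ℚ) = 1 := by
        have h0 := Int.units_mul_self (Equiv.Perm.sign τ)
        have h4 : ((Equiv.Perm.sign τ : ℤ)) * ((Equiv.Perm.sign τ : ℤ)) = 1 := by
          rw [← Units.val_mul, h0, Units.val_one]
        exact_mod_cast h4
      rw [← mul_assoc, h3, one_mul]
    rw [Finset.sum_congr rfl fun τ _ => hτ τ, Finset.sum_const, Finset.card_univ,
      Fintype.card_perm, Fintype.card_fin, nsmul_eq_mul]
  -- Step 2 : compute det M₀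
  set n : Fin k → ℕ := fun i => 2 * k - 1 - 2 * (i : ℕ) with hn
  have hni : ∀ i : Fin k, ((n i : ℕ) : ℤ) = 2 * (k : ℤ) - 1 - 2 * (i : ℕ) := by
    intro i
    have := i.isLt
    simp only [hn]
    omega
  set E : Matrix (Fin k) (Fin k) ℚ :=
    Matrix.of (fun i j : Fin k => (descPochhammer ℚ (j : ℕ)).eval ((n i : ℕ) : ℚ)) with hE
  have hE1 : E.det = (Matrix.vandermonde (fun i => ((n i : ℕ) : ℚ))).det :=
    (Matrix.det_eval_matrixOfPolynomials_eq_det_vandermonde _ _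
      (fun i => descPochhammer_natDegree ℚ i) (fun i => monic_descPochhammer ℚ i)).symm
  have hE2 : E = Matrix.diagonal (fun i => ((n i).factorial : ℚ)) * M₀ᵀ := by
    ext i j
    rw [Matrix.diagonal_mul]
    have harg : 2 * (k : ℤ) - 1 - ((j : ℕ) : ℤ) - 2 * ((i : ℕ) : ℤ) = ((n i : ℕ) : ℤ) - (j : ℕ) := by
      rw [hni i]; ring
    show (descPochhammer ℚ (j : ℕ)).eval ((n i : ℕ) : ℚ)
      = ((n i).factorial : ℚ) * factInv (2 * (k : ℤ) - 1 - ((j : ℕ) : ℤ) - 2 * ((i : ℕ) : ℤ))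
    rw [harg, fact_mul_factInv (n i) (j : ℕ), descPochhammer_eval_eq_descFactorial]
  have hdet : (∏ i : Fin k, ((n i).factorial : ℚ)) * M₀.det
      = (Matrix.vandermonde (fun i => ((n i : ℕ) : ℚ))).det := by
    rw [← hE1, hE2, Matrix.det_mul, Matrix.det_diagonal, Matrix.det_transpose]
  -- Step 3 : the vandermonde determinant
  have hvand : (Matrix.vandermonde (fun i : Fin k => ((n i : ℕ) : ℚ))).det
      = (-2 : ℚ) ^ C * (Nat.superFactorial (k - 1) : ℚ) := by
    have hfun : (fun i : Fin k => ((n i : ℕ) : ℚ))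
        = fun i : Fin k => (-2 : ℚ) * (i : ℕ) + (2 * (k : ℚ) - 1) := by
      funext i
      have h1 : ((n i : ℕ) : ℚ) = (((n i : ℕ) : ℤ) : ℚ) := by push_cast; ring
      rw [h1, hni i]
      push_cast
      ring
    rw [hfun, Matrix.det_vandermonde_add, vand_scale (-2 : ℚ) (fun i : Fin k => ((i : ℕ) : ℚ)),
      sumIoi]
    obtain ⟨m, rfl⟩ : ∃ m, k = m + 1 := ⟨k - 1, by omega⟩
    rw [Matrix.det_vandermonde_id_eq_superFactorial m]
    simp [hC, Nat.add_sub_cancel]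
  -- Step 4 : assemble
  have hPne : (∏ i : Fin k, ((n i).factorial : ℚ)) ≠ 0 := by
    apply Finset.prod_ne_zero_iff.2
    intro i _
    exact_mod_cast (Nat.factorial_pos _).ne'
  have hdetM₀ : M₀.det = ((-2 : ℚ) ^ C * (Nat.superFactorial (k - 1) : ℚ))
      / (∏ i : Fin k, ((n i).factorial : ℚ)) := by
    rw [eq_div_iff hPne, mul_comm, hdet, hvand]
  -- products over range
  have hPrange : (∏ i : Fin k, ((n i).factorial : ℚ))
      = ∏ j ∈ range k, ((2 * k - 1 - 2 * j).factorial : ℚ) := by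
    rw [← Fin.prod_univ_eq_prod_range (fun j => ((2 * k - 1 - 2 * j).factorial : ℚ)) k]
  have hBne : (∏ j ∈ range k, ((k + j).factorial : ℚ)) ≠ 0 := by
    apply Finset.prod_ne_zero_iff.2
    intro i _
    exact_mod_cast (Nat.factorial_pos _).ne'
  have hQP : (∏ j ∈ range k, ((2 * j).factorial : ℚ) / ((k + j).factorial : ℚ))
      * (∏ j ∈ range k, ((2 * k - 1 - 2 * j).factorial : ℚ))
      = (Nat.superFactorial (k - 1) : ℚ) := by
    rw [Finset.prod_div_distrib, div_mul_eq_mul_div, div_eq_iff hBne]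
    exact_mod_cast (keyNat k hk).symm
  have hneg2 : (-2 : ℚ) ^ C = (-1 : ℚ) ^ C * 2 ^ C := by
    rw [← neg_one_mul, mul_pow]
  have hP'ne : (∏ j ∈ range k, (((2 * k - 1 - 2 * j).factorial : ℚ))) ≠ 0 := hPrange ▸ hPne
  rw [step1, hdetM₀, hPrange, ← hQP, hneg2]
  field_simp
end

section
/- Let k ≥ 1 and let d₁,…,d_k be nonnegative integers with ∑_{i=1}^k d_i = r. Consider the k×k matrix over ℚ whose (i,j) entry (1 ≤ i,j ≤ k) is 1/(2k − i − 2j + 2 − d_i)!, with the convention that 1/n! = 0 when n < 0. If there exists an index u with 1 ≤ u ≤ k − r and d_u ≠ 0, then the determinant of this matrix is zero. -/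
open scoped BigOperators

/-- A finset of naturals all of whose elements are `≥ m` has sum at least
`card * m + (0 + 1 + ⋯ + (card - 1))`. -/
lemma sum_lower (m : ℕ) : ∀ T : Finset ℕ, (∀ t ∈ T, m ≤ t) →
    T.card * m + ∑ j ∈ Finset.range T.card, j ≤ ∑ t ∈ T, t := by
  intro T
  induction T using Finset.strongInduction with
  | _ T ih =>
    intro h
    rcases T.eq_empty_or_nonempty with rfl | hT
    · simp
    · set M := T.max' hT with hM
      have hMem : M ∈ T := T.max'_mem hT
      have hssub : T.erase M ⊂ T := Finset.erase_ssubset hMem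
      have hpos : 0 < T.card := Finset.card_pos.2 hT
      have hcard : T.card = (T.erase M).card + 1 := by
        rw [Finset.card_erase_of_mem hMem]; omega
      have hMax : m + (T.card - 1) ≤ M := by
        have hsub : T ⊆ Finset.Icc m M :=
          fun x hx => Finset.mem_Icc.2 ⟨h x hx, Finset.le_max' T x hx⟩
        have := Finset.card_le_card hsub
        rw [Nat.card_Icc] at this
        omega
      have ihe := ih (T.erase M) hssub (fun t ht => h t (Finset.mem_of_mem_erase ht))
      have hsumT : ∑ t ∈ T.erase M, t + M = ∑ t ∈ T, t := Finset.sum_erase_add T _ hMem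
      rw [hcard, Finset.sum_range_succ]
      have hmul : ((T.erase M).card + 1) * m = (T.erase M).card * m + m := by ring
      omega

/-- Let `k ≥ 1` and let `d₁, …, d_k` be nonnegative integers with
`∑ d_i = r`.  Consider the `k × k` matrix over `ℚ` whose `(i,j)` entry
(`1 ≤ i, j ≤ k`) is `1/(2k − i − 2j + 2 − d_i)!`, where `1/n! = 0` for `n < 0`.
If there is an index `u` with `1 ≤ u ≤ k − r` and `d_u ≠ 0`, then the determinant
of this matrix is zero.  (Indices are `0`-indexed via `Fin k`, so the `1`-indexed
`i, j, u` correspond to `i + 1, j + 1, u + 1`.) -/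
theorem determinant_vanishes_of_early_nonzero_shift (k r : ℕ) (hk : 1 ≤ k)
    (d : Fin k → ℕ) (hsum : ∑ i : Fin k, d i = r)
    (u : Fin k) (hu : ((u : ℕ) : ℤ) + 1 ≤ (k : ℤ) - (r : ℤ)) (hdu : d u ≠ 0) :
    Matrix.det (Matrix.of fun i j : Fin k =>
      factInv (2 * (k : ℤ) - ((i : ℕ) : ℤ) - 2 * ((j : ℕ) : ℤ) - 1 - (d i : ℤ)))
    = 0 := by
  have hru : (u : ℕ) + 1 + r ≤ k := by omega
  obtain ⟨i, i', hne, heq⟩ : ∃ i i' : Fin k, i ≠ i' ∧ (i : ℕ) + d i = (i' : ℕ) + d i' := by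
    by_contra hc
    push_neg at hc
    have hinj : ∀ a ∈ Finset.Ici u, ∀ b ∈ Finset.Ici u,
        a.val + d a = b.val + d b → a = b := by
      intro a _ b _ hab
      by_contra hab'
      exact hc a b hab' hab
    have hTcard : ((Finset.Ici u).image (fun i : Fin k => i.val + d i)).card
        = (Finset.Ici u).card := Finset.card_image_of_injOn hinj
    have himval : (Finset.Ici u).image Fin.val = Finset.Ico (u : ℕ) k := by
      ext t
      simp only [Finset.mem_image, Finset.mem_Ici, Finset.mem_Ico, Fin.le_def]
      constructor
      · rintro ⟨i, hi, rfl⟩; exact ⟨hi, i.isLt⟩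
      · rintro ⟨h1, h2⟩; exact ⟨⟨t, h2⟩, h1, rfl⟩
    have hScard : (Finset.Ici u).card = k - (u : ℕ) := by
      rw [← Finset.card_image_of_injective (Finset.Ici u) Fin.val_injective, himval,
        Nat.card_Ico]
    have hTlow : ∀ t ∈ (Finset.Ici u).image (fun i : Fin k => i.val + d i),
        (u : ℕ) + 1 ≤ t := by
      intro t ht
      rw [Finset.mem_image] at ht
      obtain ⟨i, hi, rfl⟩ := ht
      rw [Finset.mem_Ici, Fin.le_def] at hi
      rcases eq_or_ne i u with rfl | hne
      · have : 1 ≤ d i := Nat.one_le_iff_ne_zero.2 hdu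
        omega
      · have : (u : ℕ) ≠ (i : ℕ) := fun h => hne (Fin.ext h.symm)
        omega
    have hlow := sum_lower ((u : ℕ) + 1) _ hTlow
    rw [hTcard, hScard] at hlow
    have hsplit : ∑ t ∈ (Finset.Ici u).image (fun i : Fin k => i.val + d i), t
        = ∑ i ∈ Finset.Ici u, (i.val + d i) := Finset.sum_image hinj
    have hdle : ∑ i ∈ Finset.Ici u, d i ≤ r :=
      hsum ▸ Finset.sum_le_sum_of_subset (Finset.subset_univ _)
    have hvals : ∑ i ∈ Finset.Ici u, i.val
        = ∑ j ∈ Finset.range (k - (u : ℕ)), ((u : ℕ) + j) :=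
      calc ∑ i ∈ Finset.Ici u, i.val
          = ∑ t ∈ (Finset.Ici u).image Fin.val, t :=
            (Finset.sum_image (g := Fin.val) (f := fun t => t)
              (fun a _ b _ h => Fin.val_injective h)).symm
        _ = ∑ t ∈ Finset.Ico (u : ℕ) k, t := by rw [himval]
        _ = ∑ j ∈ Finset.range (k - (u : ℕ)), ((u : ℕ) + j) :=
            Finset.sum_Ico_eq_sum_range (fun t => t) _ _
    have htri : ∑ j ∈ Finset.range (k - (u : ℕ)), ((u : ℕ) + j)
        = (k - (u : ℕ)) * (u : ℕ) + ∑ j ∈ Finset.range (k - (u : ℕ)), j := by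
      rw [Finset.sum_add_distrib, Finset.sum_const, Finset.card_range, smul_eq_mul]
    have hub : ∑ t ∈ (Finset.Ici u).image (fun i : Fin k => i.val + d i), t
        ≤ (k - (u : ℕ)) * (u : ℕ) + (∑ j ∈ Finset.range (k - (u : ℕ)), j) + r := by
      rw [hsplit, Finset.sum_add_distrib, hvals, htri]
      omega
    have hmul : (k - (u : ℕ)) * ((u : ℕ) + 1)
        = (k - (u : ℕ)) * (u : ℕ) + (k - (u : ℕ)) := by ring
    omega
  apply Matrix.det_zero_of_row_eq hne
  funext j
  simp only [Matrix.of_apply]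
  congr 1
  omega
end

section
/- Let α be a partition and let k be an integer with k ≥ max(l(α) + 1, α₁); extend α by zeros. Then the determinant of the k×k matrix whose (i,j) entry (1 ≤ i,j ≤ k) is C(2k − i − 1 − α_{k−i+1}, 2k − 2j) equals the determinant of the (k−1)×(k−1) matrix whose (i,j) entry (1 ≤ i,j ≤ k−1) is C(2(k−1) − i − α_{(k−1)−i+1}, 2(k−1) − 2j). That is, E_α(k) = D_α(k−1). -/
open scoped BigOperators

/-- The integer-argument binomial coefficient `C(n, r)` for `n : ℤ`, `r : ℕ`:
it equals the usual binomial coefficient when `n ≥ 0`, and is `0` when `n < 0`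
(consistent with the convention that `C(n, r) = 0` whenever `r > n`). -/
def zchoose (n : ℤ) (r : ℕ) : ℚ :=
  if 0 ≤ n then (n.toNat.choose r : ℚ) else 0

lemma zchoose_eq_zero_of_lt {n : ℤ} {r : ℕ} (h : n < r) : zchoose n r = 0 := by
  unfold zchoose
  split_ifs with h0
  · have : n.toNat < r := by omega
    simp [Nat.choose_eq_zero_of_lt this]
  · rfl

lemma zchoose_eq_one {n : ℤ} {r : ℕ} (h : n = r) : zchoose n r = 1 := by
  subst h
  unfold zchoose
  simp

/-- Let `alpha` be a partition of length `m` (0-indexed), extended by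
zeros, and let `k ≥ max(l(α) + 1, α₁)`.  Then the determinant of the `k × k` matrix
with `(i,j)` entry `C(2k − i − 1 − α_{k−i+1}, 2k − 2j)` (for `1 ≤ i, j ≤ k`) equals
the determinant of the `(k−1) × (k−1)` matrix with `(i,j)` entry
`C(2(k−1) − i − α_{(k−1)−i+1}, 2(k−1) − 2j)` (for `1 ≤ i, j ≤ k−1`);
that is, `E_α(k) = D_α(k−1)`. -/
theorem E_alpha_eq_D_alpha_pred (m k : ℕ) (alpha : ℕ → ℕ)
    (hanti : ∀ i j, i ≤ j → alpha j ≤ alpha i)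
    (hpos : ∀ i, i < m → 0 < alpha i)
    (hzero : ∀ i, m ≤ i → alpha i = 0)
    (hk : max (m + 1) (alpha 0) ≤ k) :
    Matrix.det (Matrix.of fun i j : Fin k =>
      zchoose (2 * (k : ℤ) - (((i : ℕ) : ℤ) + 1) - 1 - (alpha (k - 1 - (i : ℕ)) : ℤ))
        (2 * k - 2 * ((j : ℕ) + 1)))
    = Matrix.det (Matrix.of fun i j : Fin (k - 1) =>
        zchoose (2 * ((k : ℤ) - 1) - (((i : ℕ) : ℤ) + 1) - (alpha (k - 2 - (i : ℕ)) : ℤ))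
          (2 * (k - 1) - 2 * ((j : ℕ) + 1))) := by
  obtain ⟨n, rfl⟩ : ∃ n, k = n + 1 := ⟨k - 1, by omega⟩
  have hmn : m ≤ n := by omega
  have hαn : alpha n = 0 := hzero n hmn
  rw [Matrix.det_succ_column_zero, Finset.sum_eq_single (0 : Fin (n + 1))]
  · have e0 : (Matrix.of fun i j : Fin (n + 1) =>
        zchoose (2 * ((n + 1 : ℕ) : ℤ) - (((i : ℕ) : ℤ) + 1) - 1
            - (alpha (n + 1 - 1 - (i : ℕ)) : ℤ))
          (2 * (n + 1) - 2 * ((j : ℕ) + 1))) 0 0 = 1 := by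
      simp only [Matrix.of_apply, Fin.val_zero, Nat.add_sub_cancel, Nat.sub_zero, hαn]
      apply zchoose_eq_one
      push_cast
      omega
    rw [e0]
    simp only [Fin.val_zero, pow_zero, one_mul, mul_one, Fin.succAbove_zero]
    refine congrArg Matrix.det ?_
    ext i j
    simp only [Matrix.submatrix_apply, Matrix.of_apply, Fin.val_succ]
    have hidx : n + 1 - 1 - ((i : ℕ) + 1) = n + 1 - 2 - (i : ℕ) := by omega
    rw [hidx]
    congr 1
    · push_cast
      ring
    · omega
  · intro i _ hi
    have h1 : 1 ≤ (i : ℕ) := by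
      rcases i with ⟨iv, hv⟩
      simp only [ne_eq, Fin.ext_iff, Fin.val_zero] at hi
      simpa using Nat.one_le_iff_ne_zero.mpr hi
    have hz : zchoose (2 * ((n + 1 : ℕ) : ℤ) - (((i : ℕ) : ℤ) + 1) - 1
        - (alpha (n + 1 - 1 - (i : ℕ)) : ℤ))
        (2 * (n + 1) - 2 * (((0 : Fin (n + 1)) : ℕ) + 1)) = 0 := by
      apply zchoose_eq_zero_of_lt
      have ha : (0 : ℤ) ≤ (alpha (n + 1 - 1 - (i : ℕ)) : ℤ) := Int.natCast_nonneg _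
      have hi1 : (1 : ℤ) ≤ ((i : ℕ) : ℤ) := by exact_mod_cast h1
      simp only [Fin.val_zero]
      push_cast
      omega
    simp only [Matrix.of_apply, hz, mul_zero, zero_mul]
  · intro h
    exact absurd (Finset.mem_univ _) h
end

section
/- Let λ be a partition with length m = l(λ). Then the coefficient of the monomial y₁^{λ₁+m−1} y₂^{λ₂+m−2} ⋯ y_m^{λ_m} (i.e., the exponent of y_i is λ_i + m − i) in the formal power series ∏_{1≤i<j≤m} (y_i − y_j) · exp(y₁ + ⋯ + y_m) over ℚ equals (∏_{1≤i<j≤m} (λ_i − λ_j − i + j)) / (∏_{1≤i≤m} (λ_i + m − i)!). Equivalently, ∑_{σ∈S_m} sgn(σ) ∏_{i=1}^m 1/(λ_i − i + σ(i))! = (∏_{1≤i<j≤m} (λ_i − λ_j − i + j)) / (∏_{1≤i≤m} (λ_i + m − i)!), with the convention 1/n! = 0 for n < 0. -/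
open scoped BigOperators

lemma factInv_coe_sub (L r : ℕ) :
    factInv ((L : ℤ) - r) = (L.descFactorial r : ℚ) / (L.factorial : ℚ) := by
  rcases le_or_gt r L with h | h
  · have h0 : (0 : ℤ) ≤ (L : ℤ) - r := by omega
    have h1 : ((L : ℤ) - r).toNat = L - r := by omega
    rw [factInv, if_pos h0, h1]
    have h2 : (L - r).factorial * L.descFactorial r = L.factorial :=
      Nat.factorial_mul_descFactorial h
    have h3 : ((L - r).factorial : ℚ) ≠ 0 := Nat.cast_ne_zero.mpr (Nat.factorial_ne_zero _)
    have h4 : (L.factorial : ℚ) ≠ 0 := Nat.cast_ne_zero.mpr (Nat.factorial_ne_zero _)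
    rw [mul_comm] at h2
    field_simp
    exact_mod_cast (h2.symm.trans (mul_comm _ _))
  · rw [factInv, if_neg (by omega), Nat.descFactorial_of_lt h]
    simp

lemma prod_Ioi_rev {M : Type*} [CommMonoid M] (m : ℕ) (f : Fin m → Fin m → M) :
    (∏ i : Fin m, ∏ j ∈ Finset.Ioi i, f (Fin.rev j) (Fin.rev i))
      = ∏ i : Fin m, ∏ j ∈ Finset.Ioi i, f i j := by
  rw [Finset.prod_sigma', Finset.prod_sigma']
  refine Finset.prod_nbij' (fun p => ⟨Fin.rev p.2, Fin.rev p.1⟩)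
    (fun p => ⟨Fin.rev p.2, Fin.rev p.1⟩) ?_ ?_ ?_ ?_ ?_
  · rintro ⟨i, j⟩ h
    simp only [Finset.mem_sigma, Finset.mem_univ, Finset.mem_Ioi, true_and] at h ⊢
    exact Fin.rev_lt_rev.mpr h
  · rintro ⟨i, j⟩ h
    simp only [Finset.mem_sigma, Finset.mem_univ, Finset.mem_Ioi, true_and] at h ⊢
    exact Fin.rev_lt_rev.mpr h
  · rintro ⟨i, j⟩ _; simp [Fin.rev_rev]
  · rintro ⟨i, j⟩ _; simp [Fin.rev_rev]
  · rintro ⟨i, j⟩ _; simp [Fin.rev_rev]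

/-- Let `lam` be a partition of length `m` (0-indexed).  Then the
coefficient of the monomial `y₁^(λ₁+m−1) ⋯ y_m^(λ_m)` in
`∏_{1≤i<j≤m} (y_i − y_j) · exp(y₁ + ⋯ + y_m)` equals
`(∏_{1≤i<j≤m} (λ_i − λ_j − i + j)) / (∏_{1≤i≤m} (λ_i + m − i)!)`; equivalently,
`∑_{σ ∈ S_m} sgn(σ) ∏_{i=1}^m 1/(λ_i − i + σ(i))!
  = (∏_{1≤i<j≤m} (λ_i − λ_j − i + j)) / (∏_{1≤i≤m} (λ_i + m − i)!)`,
with the convention `1/n! = 0` for `n < 0`.  (With `0`-indexed `i` and `σ`, the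
argument `λ_i − i + σ(i)` becomes `λ_i − i + σ(i)` again, since the shifts cancel.) -/
theorem leading_coefficient_of_P_lambda (m : ℕ) (lam : ℕ → ℕ)
    (hanti : ∀ i j, i ≤ j → lam j ≤ lam i)
    (hpos : ∀ i, i < m → 0 < lam i)
    (hzero : ∀ i, m ≤ i → lam i = 0) :
    ∑ σ : Equiv.Perm (Fin m),
      ((Equiv.Perm.sign σ : ℤ) : ℚ) *
        ∏ i : Fin m, factInv ((lam i : ℤ) - ((i : ℕ) : ℤ) + ((σ i : ℕ) : ℤ))
    = (∏ i : Fin m, ∏ j ∈ Finset.Ioi i,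
        ((lam i : ℚ) - (lam j : ℚ) - ((i : ℕ) : ℚ) + ((j : ℕ) : ℚ))) /
      (∏ i : Fin m, ((lam i + (m - 1 - (i : ℕ))).factorial : ℚ)) := by
  classical
  set l : Fin m → ℕ := fun i => lam i + (m - 1 - (i : ℕ)) with hl
  set lQ : Fin m → ℚ := fun i => (l i : ℚ) with hlQ
  set M : Matrix (Fin m) (Fin m) ℚ :=
    Matrix.of fun i j : Fin m => factInv ((lam j : ℤ) - ((j : ℕ) : ℤ) + ((i : ℕ) : ℤ)) with hM
  set A : Matrix (Fin m) (Fin m) ℚ :=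
    Matrix.of fun i j : Fin m => (descPochhammer ℚ (m - 1 - (i : ℕ))).eval (lQ j) with hA
  set B : Matrix (Fin m) (Fin m) ℚ :=
    Matrix.of fun i j : Fin m => (descPochhammer ℚ ((i : ℕ))).eval (lQ j) with hB
  -- Step 1: LHS is a determinant
  have hdet : (∑ σ : Equiv.Perm (Fin m),
      ((Equiv.Perm.sign σ : ℤ) : ℚ) *
        ∏ i : Fin m, factInv ((lam i : ℤ) - ((i : ℕ) : ℤ) + ((σ i : ℕ) : ℤ))) = M.det := by
    rw [Matrix.det_apply]
    refine Finset.sum_congr rfl fun σ _ => ?_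
    rw [Units.smul_def, zsmul_eq_mul]
    rfl
  -- Step 2: entries of M
  have hentry : ∀ i j : Fin m,
      M i j = ((l j).factorial : ℚ)⁻¹ * A i j := by
    intro i j
    have hi : (i : ℕ) < m := i.isLt
    have hj : (j : ℕ) < m := j.isLt
    have h1 : (lam j : ℤ) - ((j : ℕ) : ℤ) + ((i : ℕ) : ℤ)
        = ((l j : ℕ) : ℤ) - ((m - 1 - (i : ℕ) : ℕ) : ℤ) := by
      simp only [hl]; omega
    show factInv _ = _
    rw [h1, factInv_coe_sub]
    have h2 : (descPochhammer ℚ (m - 1 - (i : ℕ))).eval (lQ j)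
        = ((l j).descFactorial (m - 1 - (i : ℕ)) : ℚ) := by
      rw [hlQ]
      exact descPochhammer_eval_eq_descFactorial ℚ _ _
    show _ = _ * (descPochhammer ℚ (m - 1 - (i : ℕ))).eval (lQ j)
    rw [h2, div_eq_inv_mul]
  -- Step 3: factor out the factorials
  have hMdet : M.det = (∏ j : Fin m, ((l j).factorial : ℚ)⁻¹) * A.det := by
    have : M = Matrix.of fun i j => ((l j).factorial : ℚ)⁻¹ * A i j := by
      ext i j; exact hentry i j
    rw [this, Matrix.det_mul_row]
  -- Step 4: A is a row-permutation of B
  have hAB : A = B.submatrix Fin.revPerm id := by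
    ext i j
    have : m - 1 - (i : ℕ) = ((Fin.rev i : Fin m) : ℕ) := by
      rw [Fin.val_rev]; omega
    simp only [hA, hB, Matrix.submatrix_apply, Matrix.of_apply, id_eq, this]
    rfl
  have hAdet : A.det = ((Equiv.Perm.sign (Fin.revPerm : Equiv.Perm (Fin m)) : ℤ) : ℚ) * B.det := by
    rw [hAB, Matrix.det_permute]
  -- Step 5: det B via Vandermonde
  have hBdet : B.det = ∏ i : Fin m, ∏ j ∈ Finset.Ioi i, (lQ j - lQ i) := by
    rw [← Matrix.det_transpose]
    have h := Matrix.det_eval_matrixOfPolynomials_eq_det_vandermonde lQ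
      (fun i => descPochhammer ℚ (i : ℕ))
      (fun i => descPochhammer_natDegree ℚ _)
      (fun i => monic_descPochhammer ℚ _)
    have hT : B.transpose = Matrix.of fun i j : Fin m =>
        (descPochhammer ℚ ((j : ℕ))).eval (lQ i) := by
      ext i j; rfl
    rw [hT, ← h, Matrix.det_vandermonde]
  -- Step 6: the sign times the reversed Vandermonde product
  have hsig : ((Equiv.Perm.sign (Fin.revPerm : Equiv.Perm (Fin m)) : ℤ) : ℚ) *
      (∏ i : Fin m, ∏ j ∈ Finset.Ioi i, (lQ j - lQ i))
      = ∏ i : Fin m, ∏ j ∈ Finset.Ioi i, (lQ i - lQ j) := by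
    have h1 := Matrix.det_permute (Fin.revPerm : Equiv.Perm (Fin m)) (Matrix.vandermonde lQ)
    have h2 : (Matrix.vandermonde lQ).submatrix Fin.revPerm id
        = Matrix.vandermonde (fun i => lQ (Fin.rev i)) := by
      ext i j; rfl
    rw [h2, Matrix.det_vandermonde, Matrix.det_vandermonde] at h1
    have h3 := prod_Ioi_rev m (fun a b => lQ a - lQ b)
    rw [← h3]
    rw [← h1]
  -- Step 7: identify the numerator
  have hnum : (∏ i : Fin m, ∏ j ∈ Finset.Ioi i,
      ((lam i : ℚ) - (lam j : ℚ) - ((i : ℕ) : ℚ) + ((j : ℕ) : ℚ)))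
      = ∏ i : Fin m, ∏ j ∈ Finset.Ioi i, (lQ i - lQ j) := by
    refine Finset.prod_congr rfl fun i _ => Finset.prod_congr rfl fun j _ => ?_
    have hi : (i : ℕ) < m := i.isLt
    have hj : (j : ℕ) < m := j.isLt
    have hzi : ((l i : ℕ) : ℤ) = (lam i : ℤ) + m - 1 - (i : ℕ) := by simp only [hl]; omega
    have hzj : ((l j : ℕ) : ℤ) = (lam j : ℤ) + m - 1 - (j : ℕ) := by simp only [hl]; omega
    have : lQ i - lQ j = (((l i : ℕ) : ℤ) : ℚ) - (((l j : ℕ) : ℤ) : ℚ) := by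
      simp [hlQ]
    rw [this, hzi, hzj]
    push_cast
    ring
  rw [hdet, hMdet, hAdet, hBdet, hsig, hnum, div_eq_mul_inv, ← Finset.prod_inv_distrib,
    mul_comm]
end
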